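/- Let b₁,…,bₛ be positive reals and set b_min = min{b₁,…,bₛ}. For each i let tᵢ = ⌈bᵢ²/b_min²⌉ and aᵢ = bᵢ/√tᵢ. Then aᵢ ≤ b_min for every i, and, writing t = t₁+⋯+tₛ, the cuboid R′ ⊆ ℝᵗ whose side lengths are aᵢ repeated tᵢ times for each i (i.e. R′ = {0,a′₁}×⋯×{0,a′ₜ} where the list a′₁,…,a′ₜ consists of a₁ repeated t₁ times, then a₂ repeated t₂ times, etc.) contains a subset congruent to the cuboid R = {0,b₁}×⋯×{0,bₛ} ⊆ ℝˢ. -/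

import Mathlib

/-- A copy of a configuration `C ⊆ ℝˢ` in `ℝⁿ`: the image of `C` under a
distance-preserving map `ℝˢ → ℝⁿ`. -/
def IsCopy {s n : ℕ} (C : Set (EuclideanSpace ℝ (Fin s)))
    (X : Set (EuclideanSpace ℝ (Fin n))) : Prop :=
  ∃ f : EuclideanSpace ℝ (Fin s) → EuclideanSpace ℝ (Fin n), Isometry f ∧ X = f '' C

/-- A set `X` is monochromatic under a colouring `χ` if all its points receive
the same colour. -/
def Monochromatic {α κ : Type*} (χ : α → κ) (X : Set α) : Prop :=
  ∀ x ∈ X, ∀ y ∈ X, χ x = χ y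

/-- A set `X` is rainbow under a colouring `χ` if all its points receive
pairwise distinct colours. -/
def RainbowSet {α κ : Type*} (χ : α → κ) (X : Set α) : Prop :=
  Set.InjOn χ X

/-- The cuboid `{0, b 0} × ⋯ × {0, b (s-1)} ⊆ ℝˢ`. -/
def cuboid {s : ℕ} (b : Fin s → ℝ) : Set (EuclideanSpace ℝ (Fin s)) :=
  {x | ∀ i, x i = 0 ∨ x i = b i}

/-- A configuration is canonically Ramsey if some `ℝⁿ` admits, for every colouring
with arbitrarily many colours, a monochromatic or rainbow copy of it. -/
def CanonicallyRamsey {s : ℕ} (C : Set (EuclideanSpace ℝ (Fin s))) : Prop :=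
  ∃ n : ℕ, 0 < n ∧ ∀ (κ : Type) (χ : EuclideanSpace ℝ (Fin n) → κ),
    ∃ X : Set (EuclideanSpace ℝ (Fin n)), IsCopy C X ∧ (Monochromatic χ X ∨ RainbowSet χ X)

/-- A configuration is Ramsey if for every number of colours `r` there is `n` such
that every `r`-colouring of `ℝⁿ` admits a monochromatic copy of it. -/
def IsRamsey {s : ℕ} (C : Set (EuclideanSpace ℝ (Fin s))) : Prop :=
  ∀ r : ℕ, 0 < r → ∃ n : ℕ, ∀ χ : EuclideanSpace ℝ (Fin n) → Fin r,
    ∃ X : Set (EuclideanSpace ℝ (Fin n)), IsCopy C X ∧ Monochromatic χ X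

/-- **The cuboid `R'` contains `R`.** Let `b₁, …, bₛ > 0`, `b_min = min{b₁,…,bₛ}`,
`tᵢ = ⌈bᵢ²/b_min²⌉` and `aᵢ = bᵢ/√tᵢ`. Then each `aᵢ ≤ b_min`, and the cuboid `R'`
whose list of side lengths consists of `a₁` repeated `t₁` times, then `a₂` repeated
`t₂` times, etc. (living in `ℝᵗ` with `t = t₁ + ⋯ + tₛ`) contains a subset congruent
to `R = {0,b₁} × ⋯ × {0,bₛ}`. -/
theorem cuboid_subset_of_refined_cuboid (s : ℕ) (hs : 0 < s)
    (b : Fin s → ℝ) (hb : ∀ i, 0 < b i)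
    (bmin : ℝ) (hmin : IsLeast (Set.range b) bmin)
    (t : Fin s → ℕ) (ht : ∀ i, t i = ⌈(b i) ^ 2 / bmin ^ 2⌉₊)
    (a : Fin s → ℝ) (ha : ∀ i, a i = b i / Real.sqrt (t i)) :
    (∀ i, a i ≤ bmin) ∧
    ∀ l : List ℝ, l = (List.ofFn fun i => List.replicate (t i) (a i)).flatten →
      ∃ X : Set (EuclideanSpace ℝ (Fin l.length)),
        X ⊆ cuboid l.get ∧ IsCopy (cuboid b) X := by
  obtain ⟨⟨i₀, hi₀⟩, hlb⟩ := hmin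
  have hbmin : 0 < bmin := hi₀ ▸ hb i₀
  have hts : ∀ i, 0 < t i := by
    intro i
    rw [ht]
    exact Nat.ceil_pos.2 (div_pos (pow_pos (hb i) 2) (pow_pos hbmin 2))
  have htsr : ∀ i, (0 : ℝ) < (t i : ℝ) := fun i => Nat.cast_pos.2 (hts i)
  have hsqrt : ∀ i, 0 < Real.sqrt (t i) := fun i => Real.sqrt_pos.2 (htsr i)
  have hle : ∀ i, (b i / bmin) ^ 2 ≤ (t i : ℝ) := by
    intro i
    rw [ht, div_pow]
    exact Nat.le_ceil _
  have hale : ∀ i, a i ≤ bmin := by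
    intro i
    have h1 : b i / bmin ≤ Real.sqrt (t i) := by
      have := Real.sqrt_le_sqrt (hle i)
      rwa [Real.sqrt_sq (le_of_lt (div_pos (hb i) hbmin))] at this
    rw [ha, div_le_iff₀ (hsqrt i)]
    calc b i = (b i / bmin) * bmin := by field_simp
      _ ≤ Real.sqrt (t i) * bmin := by
          exact mul_le_mul_of_nonneg_right h1 (le_of_lt hbmin)
      _ = bmin * Real.sqrt (t i) := mul_comm _ _
  refine ⟨hale, fun l hl => ?_⟩
  set lidx : List (Fin s) := (List.ofFn fun i => List.replicate (t i) i).flatten with hlidx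
  have hmap : l = lidx.map a := by
    rw [hl, hlidx, List.map_flatten, List.map_ofFn]
    congr 1
    congr 1
    funext i
    simp [Function.comp]
  have hlen : l.length = lidx.length := by rw [hmap, List.length_map]
  set g : Fin l.length → Fin s := fun k => lidx.get (Fin.cast hlen k) with hg
  have hlg : ∀ k : Fin l.length, l.get k = a (g k) := by
    intro k
    conv_lhs => rw [List.get_eq_getElem]
    simp only [hmap, List.getElem_map]
    rfl
  have key : ∀ F : Fin s → ℝ, ∑ k : Fin l.length, F (g k) = ∑ i, (t i : ℝ) * F i := by
    intro F
    have h1 : ∑ k : Fin l.length, F (g k) = ∑ k : Fin lidx.length, F (lidx.get k) := by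
      exact Fintype.sum_equiv (finCongr hlen) _ _ (fun k => rfl)
    rw [h1]
    have h2 : ∑ k : Fin lidx.length, F (lidx.get k) = (lidx.map F).sum := by
      conv_rhs => rw [← List.ofFn_get lidx]
      rw [List.map_ofFn, List.sum_ofFn]
      rfl
    rw [h2, hlidx, List.map_flatten, List.map_ofFn, List.sum_flatten, List.map_ofFn,
      List.sum_ofFn]
    simp [Function.comp, List.sum_replicate, nsmul_eq_mul]
  set f : EuclideanSpace ℝ (Fin s) → EuclideanSpace ℝ (Fin l.length) :=
    fun x => WithLp.toLp 2 (fun k => x (g k) / Real.sqrt (t (g k))) with hf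
  have hcoord : ∀ (x y : EuclideanSpace ℝ (Fin s)) (k : Fin l.length),
      (f x k - f y k) ^ 2 = (x (g k) - y (g k)) ^ 2 / (t (g k) : ℝ) := by
    intro x y k
    rw [hf]
    simp only
    rw [div_sub_div_same, div_pow, Real.sq_sqrt (le_of_lt (htsr (g k)))]
  refine ⟨f '' cuboid b, ?_, f, ?_, rfl⟩
  · rintro z ⟨x, hx, rfl⟩
    intro k
    rcases hx (g k) with h0 | hb'
    · left
      rw [hf]
      simp [h0]
    · right
      rw [hlg k, hf]
      simp only
      rw [hb', ha]
  · apply Isometry.of_dist_eq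
    intro x y
    rw [EuclideanSpace.dist_eq, EuclideanSpace.dist_eq]
    congr 1
    have : ∀ k : Fin l.length, dist (f x k) (f y k) ^ 2
        = (x (g k) - y (g k)) ^ 2 / (t (g k) : ℝ) := by
      intro k
      rw [Real.dist_eq, sq_abs, hcoord]
    rw [Finset.sum_congr rfl (fun k _ => this k)]
    rw [key (fun i => (x i - y i) ^ 2 / (t i : ℝ))]
    apply Finset.sum_congr rfl
    intro i _
    rw [Real.dist_eq, sq_abs, mul_comm ((t i : ℝ)) _, div_mul_cancel₀ _ (ne_of_gt (htsr i))]
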